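/- Let u and v be factors of the same length m of a Sturmian word of irrational slope α. Then u and v are abelian equivalent if and only if the points x_u and x_v of the circle ℝ/ℤ associated to the cylinder sets [u] and [v] both lie in the arc from 0 to {−mα}, or both lie in the arc from {−mα} to 1. -/

import Mathlib

/-- The `n`-th letter of the Sturmian word of slope `α` and intercept `x`:
`s(n) = ⌊(n+1)α + x⌋ − ⌊nα + x⌋`. -/
noncomputable def sturmianLetter (α x : ℝ) (n : ℕ) : ℤ :=
  ⌊((n : ℝ) + 1) * α + x⌋ - ⌊(n : ℝ) * α + x⌋

/-- The prefix of length `m` of the Sturmian word of slope `α` and intercept `x`. -/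
noncomputable def sturmianPrefix (α x : ℝ) (m : ℕ) : List ℤ :=
  (List.range m).map (sturmianLetter α x)

/-- Abelian equivalence of words over `{0,1} ⊆ ℤ`: equal numbers of `0`s and of `1`s. -/
def AbelianEq (u v : List ℤ) : Prop :=
  u.count 0 = v.count 0 ∧ u.count 1 = v.count 1

lemma letter_mem (α x : ℝ) (h0 : 0 < α) (h1 : α < 1) (n : ℕ) :
    sturmianLetter α x n = 0 ∨ sturmianLetter α x n = 1 := by
  unfold sturmianLetter
  have e : ((n : ℝ) + 1) * α + x = ((n : ℝ) * α + x) + α := by ring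
  rw [e]
  have h2 : ⌊(n : ℝ) * α + x⌋ ≤ ⌊((n : ℝ) * α + x) + α⌋ :=
    Int.floor_le_floor (by linarith)
  have h3 : ⌊((n : ℝ) * α + x) + α⌋ ≤ ⌊((n : ℝ) * α + x) + 1⌋ :=
    Int.floor_le_floor (by linarith)
  rw [Int.floor_add_one] at h3
  omega

lemma sum_eq_count (l : List ℤ) (h : ∀ z ∈ l, z = 0 ∨ z = 1) :
    l.sum = (l.count 1 : ℤ) := by
  induction l with
  | nil => simp
  | cons a t ih =>
    have ha := h a List.mem_cons_self
    have ih' := ih (fun z hz => h z (List.mem_cons_of_mem a hz))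
    rcases ha with rfl | rfl
    · simp [List.count_cons, ih']
    · simp [List.count_cons, ih']; ring

lemma count_add (l : List ℤ) (h : ∀ z ∈ l, z = 0 ∨ z = 1) :
    l.count 0 + l.count 1 = l.length := by
  induction l with
  | nil => simp
  | cons a t ih =>
    have ha := h a List.mem_cons_self
    have ih' := ih (fun z hz => h z (List.mem_cons_of_mem a hz))
    rcases ha with rfl | rfl
    · simp [List.count_cons]; omega
    · simp [List.count_cons]; omega

lemma prefix_sum (α x : ℝ) (m : ℕ) :
    (sturmianPrefix α x m).sum = ⌊(m : ℝ) * α + x⌋ - ⌊x⌋ := by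
  induction m with
  | zero => simp [sturmianPrefix]
  | succ n ih =>
    unfold sturmianPrefix at *
    rw [List.range_succ, List.map_append, List.sum_append, ih]
    simp only [List.map_cons, List.map_nil, List.sum_cons, List.sum_nil, sturmianLetter]
    push_cast
    ring

theorem abelian_equivalence_iff_same_side (α : ℝ) (hα : Irrational α)
    (hmem : α ∈ Set.Ioo (0:ℝ) 1) (m : ℕ) (hm : 1 ≤ m)
    (x y : ℝ) (hx : x ∈ Set.Ico (0:ℝ) 1) (hy : y ∈ Set.Ico (0:ℝ) 1) :
    AbelianEq (sturmianPrefix α x m) (sturmianPrefix α y m) ↔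
      ((x < Int.fract (-(m : ℝ) * α) ∧ y < Int.fract (-(m : ℝ) * α)) ∨
        (Int.fract (-(m : ℝ) * α) ≤ x ∧ Int.fract (-(m : ℝ) * α) ≤ y)) := by
  obtain ⟨ha0, ha1⟩ := hmem
  obtain ⟨hx0, hx1⟩ := hx
  obtain ⟨hy0, hy1⟩ := hy
  have hmα : Irrational ((m : ℝ) * α) := by
    have hm0 : (m : ℕ) ≠ 0 := by omega
    exact (hα.natCast_mul hm0)
  have hnotint : ¬ ∃ z : ℤ, (m : ℝ) * α = (z : ℝ) := by
    rintro ⟨z, hz⟩; exact hmα ⟨z, hz.symm⟩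
  have hfracneg : Int.fract (-(m : ℝ) * α) = 1 - Int.fract ((m : ℝ) * α) := by
    have : (-(m : ℝ) * α) = -((m : ℝ) * α) := by ring
    rw [this, Int.fract_neg]
    intro h
    have h2 := Int.fract_add_floor ((m : ℝ) * α)
    rw [h] at h2
    exact hmα.ne_int ⌊(m : ℝ) * α⌋ (by linarith)
  set c := Int.fract (-(m : ℝ) * α) with hc
  set f := Int.fract ((m : ℝ) * α) with hf
  have hf0 : 0 ≤ f := Int.fract_nonneg _
  have hf1 : f < 1 := Int.fract_lt_one _
  -- floor formula
  have key : ∀ t : ℝ, 0 ≤ t → t < 1 →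
      ⌊(m : ℝ) * α + t⌋ = ⌊(m : ℝ) * α⌋ + (if t < c then 0 else 1) := by
    intro t ht0 ht1
    have heq : (m : ℝ) * α + t = (f + t) + (⌊(m : ℝ) * α⌋ : ℝ) := by
      rw [hf]; unfold Int.fract; ring
    rw [heq, Int.floor_add_intCast, add_comm]
    congr 1
    by_cases h : t < c
    · have : f + t < 1 := by rw [hfracneg] at h; linarith
      rw [if_pos h]
      exact Int.floor_eq_zero_iff.mpr ⟨by linarith, this⟩
    · push_neg at h
      rw [if_neg (not_lt.mpr h)]
      have h1 : 1 ≤ f + t := by rw [hfracneg] at h; linarith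
      have h2 : f + t < 2 := by linarith
      have : ⌊f + t⌋ = 1 := by
        apply Int.floor_eq_iff.mpr
        constructor <;> push_cast <;> linarith
      exact this
  have hex : ⌊x⌋ = 0 := Int.floor_eq_zero_iff.mpr ⟨hx0, hx1⟩
  have hey : ⌊y⌋ = 0 := Int.floor_eq_zero_iff.mpr ⟨hy0, hy1⟩
  have memx : ∀ z ∈ sturmianPrefix α x m, z = 0 ∨ z = 1 := by
    intro z hz
    simp only [sturmianPrefix, List.mem_map] at hz
    obtain ⟨n, _, rfl⟩ := hz
    exact letter_mem α x ha0 ha1 n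
  have memy : ∀ z ∈ sturmianPrefix α y m, z = 0 ∨ z = 1 := by
    intro z hz
    simp only [sturmianPrefix, List.mem_map] at hz
    obtain ⟨n, _, rfl⟩ := hz
    exact letter_mem α y ha0 ha1 n
  have hsumx := prefix_sum α x m
  have hsumy := prefix_sum α y m
  have hlx : (sturmianPrefix α x m).length = m := by simp [sturmianPrefix]
  have hly : (sturmianPrefix α y m).length = m := by simp [sturmianPrefix]
  have habs : AbelianEq (sturmianPrefix α x m) (sturmianPrefix α y m) ↔
      (sturmianPrefix α x m).sum = (sturmianPrefix α y m).sum := by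
    constructor
    · rintro ⟨_, h1⟩
      rw [sum_eq_count _ memx, sum_eq_count _ memy, h1]
    · intro h
      rw [sum_eq_count _ memx, sum_eq_count _ memy] at h
      have h1 : (sturmianPrefix α x m).count 1 = (sturmianPrefix α y m).count 1 :=
        Nat.cast_injective h
      refine ⟨?_, h1⟩
      have cx := count_add _ memx
      have cy := count_add _ memy
      omega
  rw [habs, hsumx, hsumy, hex, hey]
  rw [key x hx0 hx1, key y hy0 hy1]
  by_cases h1 : x < c <;> by_cases h2 : y < c
  · simp [h1, h2]
  · simp [h1, h2]
  · simp [h1, h2]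
  · simp only [not_lt] at h1 h2
    constructor
    · intro _; exact Or.inr ⟨h1, h2⟩
    · intro _; simp [not_lt.mpr h1, not_lt.mpr h2]
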